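/- Let K be a number field of degree d and fix integers m ≥ k ≥ 1. There exists a constant C > 0, independent of Λ and of the indices, such that for every O_K-module lattice Λ ⊆ K_ℝ^m of O_K-rank k with successive K-minima l₁, …, l_k, and for all 1 ≤ i < j ≤ k, one has ‖π_i(l_j)‖ ≤ C·‖l_i‖, where π_i : K_ℝ^m → K_ℝ·l_i is the orthogonal projection onto the real subspace K_ℝ·l_i. -/

import Mathlib

noncomputable section
open NumberField NumberField.InfinitePlace MeasureTheory Module Submodule Matrix
attribute [local instance] Classical.propDecidable
set_option synthInstance.maxHeartbeats 1000000
set_option maxHeartbeats 1000000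

/-! Setup: the space `K_ℝ = K ⊗ ℝ`, realized as the mixed space `ℝ^{r₁} × ℂ^{r₂}`, together
with the Euclidean structure given by `‖x‖² = |Δ_K|^{-2/d}·Tr(x·x̄)`, extended coordinatewise
to vectors and matrices over `K_ℝ`. This Euclidean structure is realized through explicit
linear coordinates with values in `EuclideanSpace ℝ _`. -/

namespace Paper

variable (K : Type) [Field K] [NumberField K]

/-- The mixed space `K ⊗ ℝ ≅ ℝ^{r₁} × ℂ^{r₂}`. -/
abbrev MS : Type := NumberField.mixedEmbedding.mixedSpace K

/-- Real-coordinate index type for `K_ℝ`: one coordinate for each real place and two for each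
complex place. -/
abbrev RIx : Type := {w : InfinitePlace K // IsReal w} ⊕ ({w : InfinitePlace K // IsComplex w} × Bool)

/-- The scaling factor `|Δ_K|^{-1/d}`. -/
def sK : ℝ := (Int.natAbs (NumberField.discr K) : ℝ) ^ (-(1:ℝ) / (finrank ℚ K))

lemma sK_pos : 0 < sK K := by
  apply Real.rpow_pos_of_pos
  have := NumberField.discr_ne_zero K
  exact_mod_cast Int.natAbs_pos.mpr this

/-- Coordinates of `K_ℝ` realizing the Euclidean structure `‖x‖² = |Δ_K|^{-2/d}·Tr(x·x̄)`:
a real place `v` contributes the coordinate `|Δ_K|^{-1/d}·x_v` and a complex place `w`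
contributes the two coordinates `|Δ_K|^{-1/d}·√2·Re(x_w)` and `|Δ_K|^{-1/d}·√2·Im(x_w)`,
so that the standard Euclidean norm of the coordinates equals the norm above. -/
def eucMap : MS K ≃ₗ[ℝ] EuclideanSpace ℝ (RIx K) where
  toFun x := WithLp.toLp 2 (fun q => Sum.rec (fun v => sK K * x.1 v)
    (fun p => (sK K * Real.sqrt 2) * (if p.2 then (x.2 p.1).im else (x.2 p.1).re)) q)
  invFun y := (fun v => (sK K)⁻¹ * y (.inl v),
               fun w => ⟨(sK K * Real.sqrt 2)⁻¹ * y (.inr (w, false)),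
                         (sK K * Real.sqrt 2)⁻¹ * y (.inr (w, true))⟩)
  map_add' x y := by
    refine PiLp.ext fun q => ?_
    rcases q with v | ⟨w, b⟩
    · show sK K * (x.1 v + y.1 v) = sK K * x.1 v + sK K * y.1 v
      ring
    · show (sK K * Real.sqrt 2) * (if b then (x.2 w + y.2 w).im else (x.2 w + y.2 w).re) = _
      cases b <;> simp [Complex.add_re, Complex.add_im] <;> ring
  map_smul' c x := by
    refine PiLp.ext fun q => ?_
    rcases q with v | ⟨w, b⟩
    · show sK K * (c * x.1 v) = c * (sK K * x.1 v)
      ring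
    · show (sK K * Real.sqrt 2) * (if b then (c • x.2 w).im else (c • x.2 w).re) = _
      cases b <;> simp [Complex.smul_re, Complex.smul_im] <;> ring
  left_inv x := by
    have h1 : sK K ≠ 0 := ne_of_gt (sK_pos K)
    have h2 : sK K * Real.sqrt 2 ≠ 0 := by
      have h3 : (0:ℝ) < Real.sqrt 2 := Real.sqrt_pos.mpr (by norm_num)
      positivity
    refine Prod.ext (funext fun v => ?_) (funext fun w => ?_)
    · show (sK K)⁻¹ * (sK K * x.1 v) = x.1 v
      field_simp
    · show (⟨(sK K * Real.sqrt 2)⁻¹ * ((sK K * Real.sqrt 2) * (x.2 w).re),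
            (sK K * Real.sqrt 2)⁻¹ * ((sK K * Real.sqrt 2) * (x.2 w).im)⟩ : ℂ) = x.2 w
      apply Complex.ext <;> field_simp
  right_inv y := by
    have h1 : sK K ≠ 0 := ne_of_gt (sK_pos K)
    have h2 : sK K * Real.sqrt 2 ≠ 0 := by
      have h3 : (0:ℝ) < Real.sqrt 2 := Real.sqrt_pos.mpr (by norm_num)
      positivity
    refine PiLp.ext fun q => ?_
    rcases q with v | ⟨w, b⟩
    · show sK K * ((sK K)⁻¹ * y (.inl v)) = y (.inl v)
      field_simp
    · cases b
      · show (sK K * Real.sqrt 2) * ((sK K * Real.sqrt 2)⁻¹ * y (.inr (w, false))) = _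
        field_simp
      · show (sK K * Real.sqrt 2) * ((sK K * Real.sqrt 2)⁻¹ * y (.inr (w, true))) = _
        field_simp

/-- Euclidean coordinates for vectors in `K_ℝ^m`. -/
def eucVec (m : ℕ) : (Fin m → MS K) ≃ₗ[ℝ] EuclideanSpace ℝ (Fin m × RIx K) where
  toFun x := WithLp.toLp 2 (fun p => eucMap K (x p.1) p.2)
  invFun y := fun i => (eucMap K).symm (WithLp.toLp 2 (fun q => y (i, q)))
  map_add' x y := by
    refine PiLp.ext fun p => ?_
    show eucMap K (x p.1 + y p.1) p.2 = eucMap K (x p.1) p.2 + eucMap K (y p.1) p.2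
    rw [map_add]; rfl
  map_smul' c x := by
    refine PiLp.ext fun p => ?_
    show eucMap K (c • x p.1) p.2 = c * eucMap K (x p.1) p.2
    rw [_root_.map_smul]; rfl
  left_inv x := by
    funext i
    show (eucMap K).symm (WithLp.toLp 2 (fun q => eucMap K (x i) q)) = x i
    exact (eucMap K).symm_apply_apply (x i)
  right_inv y := by
    refine PiLp.ext fun p => ?_
    show eucMap K ((eucMap K).symm (WithLp.toLp 2 (fun q => y (p.1, q)))) p.2 = y p
    rw [(eucMap K).apply_symm_apply] <;> rfl

/-- Euclidean coordinates for matrices in `M_{n×m}(K_ℝ)`. -/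
def eucMat (n m : ℕ) :
    Matrix (Fin n) (Fin m) (MS K) ≃ₗ[ℝ] EuclideanSpace ℝ (Fin n × Fin m × RIx K) where
  toFun A := WithLp.toLp 2 (fun p => eucMap K (A p.1 p.2.1) p.2.2)
  invFun y := Matrix.of fun i j => (eucMap K).symm (WithLp.toLp 2 (fun q => y (i, j, q)))
  map_add' x y := by
    refine PiLp.ext fun p => ?_
    show eucMap K (x p.1 p.2.1 + y p.1 p.2.1) p.2.2 = _
    rw [map_add]; rfl
  map_smul' c x := by
    refine PiLp.ext fun p => ?_
    show eucMap K (c • x p.1 p.2.1) p.2.2 = c * eucMap K (x p.1 p.2.1) p.2.2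
    rw [_root_.map_smul]; rfl
  left_inv x := by
    funext i j
    show (eucMap K).symm (WithLp.toLp 2 (fun q => eucMap K (x i j) q)) = x i j
    exact (eucMap K).symm_apply_apply (x i j)
  right_inv y := by
    refine PiLp.ext fun p => ?_
    show eucMap K ((eucMap K).symm (WithLp.toLp 2 (fun q => y (p.1, p.2.1, q)))) p.2.2 = y p
    rw [(eucMap K).apply_symm_apply] <;> rfl

/-- The Euclidean norm on `K_ℝ^m` (the `l²`-norm from `‖x‖² = |Δ_K|^{-2/d}·Tr(x·x̄)`,
extended coordinatewise). -/
def vnorm {m : ℕ} (x : Fin m → MS K) : ℝ := ‖eucVec K m x‖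

/-- The Euclidean norm on `M_{n×m}(K_ℝ)`. -/
def mnorm {n m : ℕ} (A : Matrix (Fin n) (Fin m) (MS K)) : ℝ := ‖eucMat K n m A‖

/-- The embedding of `M_{n×m}(O_K)` into `M_{n×m}(K_ℝ)`. -/
def embMat {n m : ℕ} (A : Matrix (Fin n) (Fin m) (𝓞 K)) : Matrix (Fin n) (Fin m) (MS K) :=
  A.map (fun a => NumberField.mixedEmbedding K (algebraMap (𝓞 K) K a))

/-- The rank (over `K`) of a matrix with entries in `O_K`. -/
def rankOK {n m : ℕ} (A : Matrix (Fin n) (Fin m) (𝓞 K)) : ℕ :=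
  (A.map (algebraMap (𝓞 K) K)).rank

end Paper

/-! Generic notions for Euclidean spaces: oscillation, admissible functions, integration over
subspaces (with respect to the induced Lebesgue measure), covering radius and height
(covolume) of lattices. -/

namespace Paper

/-- The oscillation function `E_f(x, ε) = sup_{‖x−y‖ ≤ ε} |f(x)−f(y)|`. -/
def Ef {V : Type} [NormedAddCommGroup V] (f : V → ℝ) (x : V) (ε : ℝ) : ℝ :=
  ⨆ y : {y : V // ‖x - y‖ ≤ ε}, |f x - f (y : V)|

/-- Integral of `g` over the subspace `W ⊆ V` with respect to the Lebesgue measure induced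
on `W` by the inner product of `V` (computed in an orthonormal coordinate system of `W`). -/
def subInt {V : Type} [NormedAddCommGroup V] [InnerProductSpace ℝ V] [FiniteDimensional ℝ V]
    (W : Submodule ℝ V) (g : V → ℝ) : ℝ :=
  ∫ y : EuclideanSpace ℝ (Fin (Module.finrank ℝ W)),
    g (((stdOrthonormalBasis ℝ W).repr.symm y : W) : V)

/-- A function on a Euclidean space is admissible with constant `Cf` if it is compactly
supported, measurable, and for every `ε > 0` and every nonzero real subspace `W`, the
integral of its oscillation `E_f(·, ε)` over `W` is at most `Cf·ε`. -/
def IsAdmissible {V : Type} [NormedAddCommGroup V] [InnerProductSpace ℝ V]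
    [FiniteDimensional ℝ V] [MeasurableSpace V] [BorelSpace V] (f : V → ℝ) (Cf : ℝ) : Prop :=
  HasCompactSupport f ∧ Measurable f ∧ 0 < Cf ∧
    ∀ ε : ℝ, 0 < ε → ∀ W : Submodule ℝ V, W ≠ ⊥ →
      subInt W (fun x => Ef f x ε) ≤ Cf * ε

/-- The covering radius of a subset `S` of a normed space:
`ρ(S) = sup_{x ∈ span ℝ S} inf_{v ∈ S} ‖x−v‖`. -/
def covRadV {V : Type} [NormedAddCommGroup V] [Module ℝ V] (S : Set V) : ℝ :=
  ⨆ x : Submodule.span ℝ S, ⨅ v : S, ‖(x : V) - (v : V)‖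

/-- The height `H(L) = vol((L⊗ℝ)/L)` of a `ℤ`-submodule `L` of a Euclidean space, computed as
the covolume of the image of `L` in an orthonormal coordinate system of `span ℝ L`. -/
def hgtV {V : Type} [NormedAddCommGroup V] [InnerProductSpace ℝ V] [FiniteDimensional ℝ V]
    (L : Submodule ℤ V) : ℝ :=
  ZLattice.covolume
    ((L.comap (((Submodule.span ℝ (L : Set V)).subtype).restrictScalars ℤ)).map
      (((stdOrthonormalBasis ℝ (Submodule.span ℝ (L : Set V))).repr.toLinearEquiv.restrictScalars
        ℤ).toLinearMap)) MeasureTheory.volume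

end Paper

/-! `O_K`-module lattices in `K_ℝ^m` and their successive `K`-minima. -/

namespace Paper

variable (K : Type) [Field K] [NumberField K]

/-- The action of an algebraic integer on a vector of `K_ℝ^m` (coordinatewise
multiplication through the mixed embedding). -/
def okSmul {m : ℕ} (a : NumberField.RingOfIntegers K) (x : Fin m → MS K) : Fin m → MS K :=
  fun t => NumberField.mixedEmbedding K (algebraMap (NumberField.RingOfIntegers K) K a) * x t

/-- An `O_K`-module lattice in `K_ℝ^m`: a discrete additive subgroup stable under the
`O_K`-action. -/
def IsOKModuleLattice {m : ℕ} (Λ : Set (Fin m → MS K)) : Prop :=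
  (0 : Fin m → MS K) ∈ Λ ∧ (∀ x ∈ Λ, ∀ y ∈ Λ, x + y ∈ Λ) ∧ (∀ x ∈ Λ, -x ∈ Λ) ∧
  (∀ a : NumberField.RingOfIntegers K, ∀ x ∈ Λ, okSmul K a x ∈ Λ) ∧
  (∃ ε : ℝ, 0 < ε ∧ ∀ x ∈ Λ, vnorm K x < ε → x = 0)

/-- The subset `K·l₁ + ⋯ + K·l_i ⊆ K_ℝ^m` (`K`-span of the first `i` vectors). -/
def KSpanUpTo {m k : ℕ} (l : Fin k → (Fin m → MS K)) (i : ℕ) : Set (Fin m → MS K) :=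
  {x | ∃ c : Fin k → K, x = fun t =>
    ∑ j ∈ Finset.univ.filter (fun j : Fin k => (j : ℕ) < i),
      NumberField.mixedEmbedding K (c j) * l j t}

/-- `l₁, …, l_k` is a system of successive `K`-minima of `Λ`: each `l_i` belongs to `Λ`,
lies outside `K·l₁ + ⋯ + K·l_{i-1}`, and has minimal norm among such lattice vectors. -/
def IsSuccKMinima {m k : ℕ} (Λ : Set (Fin m → MS K)) (l : Fin k → (Fin m → MS K)) : Prop :=
  ∀ i : Fin k, l i ∈ Λ ∧ l i ∉ KSpanUpTo K l (i : ℕ) ∧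
    ∀ v ∈ Λ, v ∉ KSpanUpTo K l (i : ℕ) → vnorm K (l i) ≤ vnorm K v

/-- The real subspace `K_ℝ·v` of the Euclidean model of `K_ℝ^m`. -/
def lineR {m : ℕ} (v : Fin m → MS K) : Submodule ℝ (EuclideanSpace ℝ (Fin m × RIx K)) :=
  Submodule.span ℝ ((eucVec K m) '' {x | ∃ a : MS K, x = fun t => a * v t})

end Paper

/-!
STATEMENT 11: Let K be a number field of degree d and fix integers m ≥ k ≥ 1. There exists
a constant C > 0, independent of Λ and of the indices, such that for every O_K-module
lattice Λ ⊆ K_ℝ^m of O_K-rank k with successive K-minima l₁, …, l_k, and for all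
1 ≤ i < j ≤ k, one has ‖π_i(l_j)‖ ≤ C·‖l_i‖, where π_i : K_ℝ^m → K_ℝ·l_i is the orthogonal
projection onto the real subspace K_ℝ·l_i.
-/

open Paper NumberField

namespace Helper

lemma euc_coord_abs_le {ι : Type} [Fintype ι] (y : EuclideanSpace ℝ ι) (q : ι) : |y q| ≤ ‖y‖ := by
  rw [EuclideanSpace.norm_eq]
  have h1 : |y q| ^ 2 ≤ ∑ i, ‖y i‖ ^ 2 := by
    have := Finset.single_le_sum (f := fun i => ‖y i‖ ^ 2)
      (fun i _ => sq_nonneg _) (Finset.mem_univ q)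
    simpa [Real.norm_eq_abs, sq_abs] using this
  calc |y q| = Real.sqrt (|y q| ^ 2) := by rw [Real.sqrt_sq (abs_nonneg _)]
  _ ≤ _ := Real.sqrt_le_sqrt (by simpa [sq_abs] using h1)

lemma euc_norm_le_of_coord {ι : Type} [Fintype ι] (y : EuclideanSpace ℝ ι) (B : ℝ)
    (hB : 0 ≤ B) (h : ∀ q, |y q| ≤ B) : ‖y‖ ≤ Real.sqrt (Fintype.card ι) * B := by
  rw [EuclideanSpace.norm_eq]
  have h1 : ∑ i, ‖y i‖ ^ 2 ≤ (Fintype.card ι : ℝ) * B ^ 2 := by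
    calc ∑ i, ‖y i‖ ^ 2 ≤ ∑ _i : ι, B ^ 2 := by
          apply Finset.sum_le_sum
          intro i _
          have h2 : ‖y i‖ ≤ B := by simpa [Real.norm_eq_abs] using h i
          exact pow_le_pow_left₀ (norm_nonneg _) h2 2
    _ = (Fintype.card ι : ℝ) * B ^ 2 := by simp [Finset.sum_const, nsmul_eq_mul]
  calc Real.sqrt (∑ i, ‖y i‖ ^ 2) ≤ Real.sqrt ((Fintype.card ι : ℝ) * B ^ 2) :=
        Real.sqrt_le_sqrt h1
  _ = Real.sqrt (Fintype.card ι) * B := by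
      rw [Real.sqrt_mul (by positivity), Real.sqrt_sq hB]

variable (K : Type) [Field K] [NumberField K]

lemma eucMap_inl (c : MS K) (v : {w : InfinitePlace K // IsReal w}) :
    eucMap K c (Sum.inl v) = sK K * c.1 v := rfl

lemma eucMap_inr (c : MS K) (w : {w : InfinitePlace K // IsComplex w}) (b : Bool) :
    eucMap K c (Sum.inr (w, b)) = (sK K * Real.sqrt 2) * (if b then (c.2 w).im else (c.2 w).re) :=
  rfl

lemma eucVec_apply {m : ℕ} (x : Fin m → MS K) (p : Fin m × RIx K) :
    eucVec K m x p = eucMap K (x p.1) p.2 := rfl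

/-- componentwise bounds from coordinate bounds -/
lemma comp_re_le (c : MS K) (M : ℝ) (h : ∀ q, |eucMap K c q| ≤ M)
    (v : {w : InfinitePlace K // IsReal w}) : |c.1 v| ≤ M / sK K := by
  have hs := sK_pos K
  have := h (Sum.inl v)
  rw [eucMap_inl, abs_mul, abs_of_pos hs] at this
  rw [le_div_iff₀ hs]
  linarith [this]

lemma comp_cx_le (c : MS K) (M : ℝ) (h : ∀ q, |eucMap K c q| ≤ M)
    (w : {w : InfinitePlace K // IsComplex w}) :
    ‖c.2 w‖ ≤ Real.sqrt 2 * M / sK K := by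
  have hs := sK_pos K
  have h2 : (0:ℝ) < Real.sqrt 2 := Real.sqrt_pos.mpr (by norm_num)
  have hre := h (Sum.inr (w, false))
  have him := h (Sum.inr (w, true))
  rw [eucMap_inr, abs_mul, abs_of_pos (by positivity)] at hre him
  simp only [if_true, if_false, Bool.false_eq_true, ite_false, ite_true] at hre him
  have habs : ‖c.2 w‖ ≤ |(c.2 w).re| + |(c.2 w).im| :=
    Complex.norm_le_abs_re_add_abs_im _
  have hM : 0 ≤ M := le_trans (by positivity) hre
  have h22 : Real.sqrt 2 * Real.sqrt 2 = 2 := Real.mul_self_sqrt (by norm_num)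
  have hre' : |(c.2 w).re| ≤ M / (sK K * Real.sqrt 2) := by
    rw [le_div_iff₀ (by positivity)]; nlinarith [hre]
  have him' : |(c.2 w).im| ≤ M / (sK K * Real.sqrt 2) := by
    rw [le_div_iff₀ (by positivity)]; nlinarith [him]
  calc ‖c.2 w‖ ≤ |(c.2 w).re| + |(c.2 w).im| := habs
  _ ≤ M / (sK K * Real.sqrt 2) + M / (sK K * Real.sqrt 2) := add_le_add hre' him'
  _ = Real.sqrt 2 * M / sK K := by
      rw [← add_div]
      rw [div_eq_div_iff (by positivity) (ne_of_gt hs)]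
      linear_combination (-(M * sK K)) * h22

/-- The key multiplication bound. -/
lemma mult_bound {m : ℕ} (c : MS K) (x : Fin m → MS K) :
    ‖eucVec K m (fun t => c * x t)‖ ≤
      (Real.sqrt (Fintype.card (Fin m × RIx K)) * (2 * Real.sqrt 2) / sK K) *
        (‖eucMap K c‖ * ‖eucVec K m x‖) := by
  have hs := sK_pos K
  have h2 : (0:ℝ) < Real.sqrt 2 := Real.sqrt_pos.mpr (by norm_num)
  set E := ‖eucMap K c‖ with hE
  set X := ‖eucVec K m x‖ with hX
  have hE0 : 0 ≤ E := norm_nonneg _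
  have hX0 : 0 ≤ X := norm_nonneg _
  have hcb : ∀ q, |eucMap K c q| ≤ E := fun q => euc_coord_abs_le _ q
  have hxb : ∀ t : Fin m, ∀ q, |eucMap K (x t) q| ≤ X := by
    intro t q
    have := euc_coord_abs_le (eucVec K m x) (t, q)
    simpa [eucVec_apply] using this
  set B := 2 * Real.sqrt 2 * E * X / sK K with hB
  have hB0 : 0 ≤ B := by positivity
  have hcoord : ∀ p : Fin m × RIx K, |eucVec K m (fun t => c * x t) p| ≤ B := by
    rintro ⟨t, v | ⟨w, b⟩⟩
    · -- real place
      have h1 : |c.1 v| ≤ E / sK K := comp_re_le K c E hcb v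
      have h2' : |(x t).1 v| ≤ X / sK K := comp_re_le K (x t) X (hxb t) v
      have : eucVec K m (fun t => c * x t) (t, Sum.inl v) = sK K * (c.1 v * (x t).1 v) := rfl
      rw [this, abs_mul, abs_of_pos hs, abs_mul]
      calc sK K * (|c.1 v| * |(x t).1 v|) ≤ sK K * ((E / sK K) * (X / sK K)) := by
            apply mul_le_mul_of_nonneg_left _ (le_of_lt hs)
            exact mul_le_mul h1 h2' (abs_nonneg _) (by positivity)
      _ = E * X / sK K := by field_simp
      _ ≤ B := by
          rw [hB]
          rw [div_le_div_iff₀ hs hs]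
          have hge1 : (1:ℝ) ≤ Real.sqrt 2 := by
            rw [show (1:ℝ) = Real.sqrt 1 by simp]
            exact Real.sqrt_le_sqrt (by norm_num)
          have h3 : 0 ≤ E * X * sK K := by positivity
          have h4 : 0 ≤ Real.sqrt 2 * (E * X * sK K) := by positivity
          nlinarith [mul_le_mul_of_nonneg_right hge1 h3, h4]
    · -- complex place
      have h1 : ‖c.2 w‖ ≤ Real.sqrt 2 * E / sK K := comp_cx_le K c E hcb w
      have h2' : ‖(x t).2 w‖ ≤ Real.sqrt 2 * X / sK K :=
        comp_cx_le K (x t) X (hxb t) w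
      have heq : eucVec K m (fun t => c * x t) (t, Sum.inr (w, b)) =
          (sK K * Real.sqrt 2) *
            (if b then (c.2 w * (x t).2 w).im else (c.2 w * (x t).2 w).re) := rfl
      rw [heq, abs_mul, abs_of_pos (by positivity)]
      have hbound : |if b then (c.2 w * (x t).2 w).im else (c.2 w * (x t).2 w).re| ≤
          ‖c.2 w‖ * ‖(x t).2 w‖ := by
        cases b
        · simpa [norm_mul] using Complex.abs_re_le_norm (c.2 w * (x t).2 w)
        · simpa [norm_mul] using Complex.abs_im_le_norm (c.2 w * (x t).2 w)
      have h22 : Real.sqrt 2 * Real.sqrt 2 = 2 := Real.mul_self_sqrt (by norm_num)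
      calc (sK K * Real.sqrt 2) * |if b then (c.2 w * (x t).2 w).im else (c.2 w * (x t).2 w).re|
          ≤ (sK K * Real.sqrt 2) * ((Real.sqrt 2 * E / sK K) * (Real.sqrt 2 * X / sK K)) := by
            apply mul_le_mul_of_nonneg_left _ (by positivity)
            calc |if b then (c.2 w * (x t).2 w).im else (c.2 w * (x t).2 w).re|
                ≤ ‖c.2 w‖ * ‖(x t).2 w‖ := hbound
            _ ≤ (Real.sqrt 2 * E / sK K) * (Real.sqrt 2 * X / sK K) :=
                mul_le_mul h1 h2' (norm_nonneg _) (by positivity)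
      _ = B := by
          rw [hB]
          have hsne : sK K ≠ 0 := ne_of_gt hs
          field_simp
          linear_combination (E * X) * h22
  have := euc_norm_le_of_coord (eucVec K m (fun t => c * x t)) B hB0 hcoord
  calc ‖eucVec K m (fun t => c * x t)‖ ≤ Real.sqrt (Fintype.card (Fin m × RIx K)) * B := this
  _ = (Real.sqrt (Fintype.card (Fin m × RIx K)) * (2 * Real.sqrt 2) / sK K) * (E * X) := by
      rw [hB]; field_simp

/-- Covering property of `O_K` in `K_ℝ`. -/
lemma covering : ∃ ρ : ℝ, 0 ≤ ρ ∧ ∀ a : MS K, ∃ b : 𝓞 K,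
    ‖eucMap K (a - NumberField.mixedEmbedding K (algebraMap (𝓞 K) K b))‖ ≤ ρ := by
  set ι := Module.Free.ChooseBasisIndex ℤ (𝓞 K)
  set bb := NumberField.mixedEmbedding.latticeBasis K with hbb
  refine ⟨∑ i : ι, ‖eucMap K (bb i)‖, Finset.sum_nonneg fun i _ => norm_nonneg _, ?_⟩
  intro a
  set r : ι → ℝ := fun i => bb.repr a i with hr
  set n : ι → ℤ := fun i => round (r i) with hn
  refine ⟨∑ i : ι, n i • NumberField.RingOfIntegers.basis K i, ?_⟩
  have hmap : NumberField.mixedEmbedding K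
      (algebraMap (𝓞 K) K (∑ i : ι, n i • NumberField.RingOfIntegers.basis K i)) =
      ∑ i : ι, (n i : ℝ) • bb i := by
    rw [map_sum, map_sum]
    apply Finset.sum_congr rfl
    intro i _
    rw [map_zsmul, map_zsmul, Int.cast_smul_eq_zsmul]
    congr 1
    rw [hbb, NumberField.mixedEmbedding.latticeBasis_apply, NumberField.integralBasis_apply]
  rw [hmap]
  have ha : a = ∑ i : ι, r i • bb i := (bb.sum_repr a).symm
  have hsub : a - ∑ i : ι, (n i : ℝ) • bb i = ∑ i : ι, (r i - (n i : ℝ)) • bb i := by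
    rw [ha]
    rw [← Finset.sum_sub_distrib]
    apply Finset.sum_congr rfl
    intro i _
    rw [sub_smul]
  rw [hsub, map_sum]
  calc ‖∑ i : ι, eucMap K ((r i - (n i : ℝ)) • bb i)‖
      ≤ ∑ i : ι, ‖eucMap K ((r i - (n i : ℝ)) • bb i)‖ := norm_sum_le _ _
  _ ≤ ∑ i : ι, ‖eucMap K (bb i)‖ := by
      apply Finset.sum_le_sum
      intro i _
      rw [_root_.map_smul, norm_smul, Real.norm_eq_abs]
      have : |r i - (n i : ℝ)| ≤ 1 := le_trans (abs_sub_round (r i)) (by norm_num)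
      calc |r i - (n i : ℝ)| * ‖eucMap K (bb i)‖ ≤ 1 * ‖eucMap K (bb i)‖ :=
            mul_le_mul_of_nonneg_right this (norm_nonneg _)
      _ = ‖eucMap K (bb i)‖ := one_mul _

/-- Pythagoras step. -/
lemma proj_norm_le {V : Type} [NormedAddCommGroup V] [InnerProductSpace ℝ V]
    [FiniteDimensional ℝ V] (W : Submodule ℝ V) (u w : V) (hw : w ∈ W)
    (h : ‖u‖ ≤ ‖u - w‖) :
    ‖(orthogonalProjection W u : V)‖ ≤ ‖(orthogonalProjection W u : V) - w‖ := by
  set p : V := (orthogonalProjection W u : V) with hp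
  have hpW : p ∈ W := SetLike.coe_mem _
  have hperp : u - p ∈ Wᗮ := Submodule.sub_starProjection_mem_orthogonal (K := W) u
  have key : ∀ z ∈ W, ‖u - z‖ ^ 2 = ‖u - p‖ ^ 2 + ‖p - z‖ ^ 2 := by
    intro z hz
    have hdecomp : u - z = (u - p) + (p - z) := by abel
    rw [hdecomp, norm_add_sq_real]
    have hinner : inner ℝ (u - p) (p - z) = (0:ℝ) := by
      rw [real_inner_comm]; exact hperp _ (W.sub_mem hpW hz)
    rw [hinner]; ring
  have h0 := key 0 (zero_mem W)
  simp only [sub_zero] at h0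
  have hw2 := key w hw
  have hsq : ‖u‖ ^ 2 ≤ ‖u - w‖ ^ 2 := pow_le_pow_left₀ (norm_nonneg _) h 2
  have hfin : ‖p‖ ^ 2 ≤ ‖p - w‖ ^ 2 := by nlinarith [h0, hw2, hsq]
  nlinarith [norm_nonneg p, norm_nonneg (p - w), hfin]

/-- the "line" `K_ℝ·v` as an explicit submodule -/
def lineSub {m : ℕ} (v : Fin m → MS K) : Submodule ℝ (EuclideanSpace ℝ (Fin m × RIx K)) where
  carrier := {y | ∃ a : MS K, y = eucVec K m fun t => a * v t}
  add_mem' := by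
    rintro y₁ y₂ ⟨a₁, rfl⟩ ⟨a₂, rfl⟩
    refine ⟨a₁ + a₂, ?_⟩
    rw [← map_add]
    congr 1
    funext t
    simp [add_mul]
  zero_mem' := ⟨0, by rw [← (eucVec K m).map_zero]; congr 1; funext t; simp⟩
  smul_mem' := by
    rintro r y ⟨a, rfl⟩
    refine ⟨r • a, ?_⟩
    rw [← _root_.map_smul]
    congr 1
    funext t
    simp [smul_mul_assoc]

lemma lineR_le_lineSub {m : ℕ} (v : Fin m → MS K) : lineR K v ≤ lineSub K v := by
  rw [lineR, Submodule.span_le]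
  rintro y ⟨x, ⟨a, rfl⟩, rfl⟩
  exact ⟨a, rfl⟩

lemma mem_lineR {m : ℕ} (v : Fin m → MS K) (a : MS K) :
    eucVec K m (fun t => a * v t) ∈ lineR K v :=
  Submodule.subset_span ⟨fun t => a * v t, ⟨a, rfl⟩, rfl⟩

/-- the translated vector stays outside the span -/
lemma sub_not_in_span {m k : ℕ} (l : Fin k → (Fin m → MS K)) (i j : Fin k) (hij : i < j)
    (b : 𝓞 K) (hj : l j ∉ KSpanUpTo K l (j : ℕ)) :
    (l j - okSmul K b (l i)) ∉ KSpanUpTo K l (j : ℕ) := by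
  intro hv
  apply hj
  obtain ⟨c, hc⟩ := hv
  refine ⟨fun j' => c j' + (if j' = i then algebraMap (𝓞 K) K b else 0), ?_⟩
  funext t
  have hft : ∀ j' : Fin k,
      NumberField.mixedEmbedding K (c j' + (if j' = i then algebraMap (𝓞 K) K b else 0)) * l j' t
      = NumberField.mixedEmbedding K (c j') * l j' t +
        (if j' = i then NumberField.mixedEmbedding K (algebraMap (𝓞 K) K b) * l j' t else 0) := by
    intro j'
    rw [map_add, add_mul]
    congr 1
    split_ifs with h
    · rfl
    · rw [map_zero, zero_mul]
  calc l j t = (l j t - NumberField.mixedEmbedding K (algebraMap (𝓞 K) K b) * l i t) +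
      NumberField.mixedEmbedding K (algebraMap (𝓞 K) K b) * l i t := by ring
  _ = ∑ j' ∈ Finset.univ.filter (fun j' : Fin k => (j' : ℕ) < (j : ℕ)),
        NumberField.mixedEmbedding K (c j') * l j' t +
      NumberField.mixedEmbedding K (algebraMap (𝓞 K) K b) * l i t := by
      have := congrFun hc t
      rw [← this]
      rfl
  _ = ∑ j' ∈ Finset.univ.filter (fun j' : Fin k => (j' : ℕ) < (j : ℕ)),
        NumberField.mixedEmbedding K (c j' + (if j' = i then algebraMap (𝓞 K) K b else 0)) *
          l j' t := by
      rw [Finset.sum_congr rfl (fun j' _ => hft j')]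
      rw [Finset.sum_add_distrib]
      congr 1
      rw [Finset.sum_ite_eq' (Finset.univ.filter (fun j' : Fin k => (j' : ℕ) < (j : ℕ))) i
        (fun j' => NumberField.mixedEmbedding K (algebraMap (𝓞 K) K b) * l j' t)]
      rw [if_pos]
      simp only [Finset.mem_filter, Finset.mem_univ, true_and]
      exact hij

end Helper


theorem projection_of_minima_bound (K : Type) [Field K] [NumberField K]
    (m k : ℕ) (hk : 1 ≤ k) (hkm : k ≤ m) :
    ∃ C : ℝ, 0 < C ∧
      ∀ Λ : Set (Fin m → MS K), IsOKModuleLattice K Λ →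
        -- `Λ` has `O_K`-rank `k`
        Module.finrank ℝ (Submodule.span ℝ Λ) = k * Module.finrank ℚ K →
        ∀ l : Fin k → (Fin m → MS K), IsSuccKMinima K Λ l →
          ∀ i j : Fin k, i < j →
            ‖orthogonalProjection (lineR K (l i)) (eucVec K m (l j))‖
              ≤ C * vnorm K (l i) := by
  obtain ⟨ρ, hρ0, hρ⟩ := Helper.covering K
  set B0 : ℝ := Real.sqrt (Fintype.card (Fin m × RIx K)) * (2 * Real.sqrt 2) / sK K with hB0
  have hB00 : 0 ≤ B0 := by
    have := sK_pos K
    positivity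
  refine ⟨B0 * ρ + 1, by positivity, ?_⟩
  intro Λ hΛ _hrank l hmin i j hij
  obtain ⟨hzero, hadd, hneg, hsmul, _⟩ := hΛ
  set W := lineR K (l i) with hW
  set u := eucVec K m (l j) with hu
  set p : EuclideanSpace ℝ (Fin m × RIx K) := (↑(orthogonalProjection W u) : EuclideanSpace ℝ (Fin m × RIx K)) with hp
  -- p lies in the line, so p = eucVec (a * l i) for some a
  obtain ⟨a, hpa⟩ := Helper.lineR_le_lineSub K (l i) (SetLike.coe_mem (orthogonalProjection W u))
  -- choose b ∈ O_K close to a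
  obtain ⟨b, hb⟩ := hρ a
  -- the lattice vector v = l j - b · l i
  set v : Fin m → MS K := l j - okSmul K b (l i) with hv
  have hvΛ : v ∈ Λ := by
    have h1 : okSmul K b (l i) ∈ Λ := hsmul b (l i) (hmin i).1
    have h2 : -(okSmul K b (l i)) ∈ Λ := hneg _ h1
    have h3 := hadd (l j) (hmin j).1 _ h2
    simpa [hv, sub_eq_add_neg] using h3
  have hvnot : v ∉ KSpanUpTo K l (j : ℕ) :=
    Helper.sub_not_in_span K l i j hij b (hmin j).2.1
  have hmin_le : vnorm K (l j) ≤ vnorm K v := (hmin j).2.2 v hvΛ hvnot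
  -- translate to Euclidean geometry
  set w : EuclideanSpace ℝ (Fin m × RIx K) :=
    eucVec K m (okSmul K b (l i)) with hw'
  have hwW : w ∈ W := by
    have : okSmul K b (l i) = fun t =>
        NumberField.mixedEmbedding K (algebraMap (𝓞 K) K b) * l i t := rfl
    rw [hw', this]
    exact Helper.mem_lineR K (l i) _
  have hnorm_ineq : ‖u‖ ≤ ‖u - w‖ := by
    have : eucVec K m v = u - w := by rw [hv, map_sub]
    calc ‖u‖ = vnorm K (l j) := rfl
    _ ≤ vnorm K v := hmin_le
    _ = ‖eucVec K m v‖ := rfl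
    _ = ‖u - w‖ := by rw [this]
  have hproj : ‖p‖ ≤ ‖p - w‖ := Helper.proj_norm_le W u w hwW hnorm_ineq
  -- rewrite p - w
  have hpw : p - w = eucVec K m (fun t =>
      (a - NumberField.mixedEmbedding K (algebraMap (𝓞 K) K b)) * l i t) := by
    rw [hp, hpa, hw', ← map_sub]
    congr 1
    funext t
    show a * l i t - okSmul K b (l i) t = _
    rw [sub_mul]
    rfl
  have hmb := Helper.mult_bound K
    (a - NumberField.mixedEmbedding K (algebraMap (𝓞 K) K b)) (l i)
  have hfinal : ‖p - w‖ ≤ B0 * (ρ * vnorm K (l i)) := by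
    rw [hpw]
    calc ‖eucVec K m (fun t =>
        (a - NumberField.mixedEmbedding K (algebraMap (𝓞 K) K b)) * l i t)‖
        ≤ B0 * (‖eucMap K (a - NumberField.mixedEmbedding K (algebraMap (𝓞 K) K b))‖ *
            ‖eucVec K m (l i)‖) := hmb
    _ ≤ B0 * (ρ * vnorm K (l i)) := by
        apply mul_le_mul_of_nonneg_left _ hB00
        apply mul_le_mul_of_nonneg_right hb (norm_nonneg _)
  have hnn : 0 ≤ vnorm K (l i) := norm_nonneg _
  calc ‖orthogonalProjection (lineR K (l i)) (eucVec K m (l j))‖ = ‖p‖ := rfl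
  _ ≤ ‖p - w‖ := hproj
  _ ≤ B0 * (ρ * vnorm K (l i)) := hfinal
  _ = (B0 * ρ) * vnorm K (l i) := by ring
  _ ≤ (B0 * ρ + 1) * vnorm K (l i) := by nlinarith
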